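/- Let q = p^d be a prime power and let S be a subgroup of order n > 1 of the multiplicative group of the finite field F_q. Then S generates the additive group of F_q if and only if the multiplicative order of p modulo n equals d. -/

import Mathlib

private lemma aux_pow_one_iff (n p m : ℕ) (hp : 0 < p) :
    ((p : ZMod n)) ^ m = 1 ↔ n ∣ p ^ m - 1 := by
  have h1 : 1 ≤ p ^ m := Nat.one_le_pow _ _ hp
  rw [← Nat.cast_pow, ← ZMod.natCast_eq_zero_iff]
  rw [Nat.cast_sub h1]
  push_cast
  constructor
  · intro h; rw [h]; ring
  · intro h; have := sub_eq_zero.mp h; simpa using this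

/-- Let `q = p^d` be a prime power and `S` a subgroup of order `n > 1` of the multiplicative
group of the finite field `F_q`. Then `S` generates the additive group of `F_q` if and only if
the multiplicative order of `p` modulo `n` equals `d`. -/
theorem stmt0 (p d n : ℕ) (hp : p.Prime) (hd : 0 < d)
    (F : Type*) [Field F] [Fintype F] (hF : Fintype.card F = p ^ d)
    (S : Subgroup Fˣ) (hn : Nat.card S = n) (hn1 : 1 < n) :
    AddSubgroup.closure ((fun u : Fˣ => (u : F)) '' (S : Set Fˣ)) = ⊤ ↔
      orderOf (p : ZMod n) = d := by
  classical
  have hq1 : 1 < p ^ d := Nat.one_lt_pow hd.ne' hp.one_lt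
  -- n divides p^d - 1
  have hdvd : n ∣ p ^ d - 1 := by
    have h1 : Nat.card S ∣ Nat.card Fˣ := Subgroup.card_subgroup_dvd_card S
    rwa [hn, Nat.card_units, Nat.card_eq_fintype_card, hF] at h1
  -- p is coprime to n
  have hcop : Nat.Coprime p n := by
    rw [hp.coprime_iff_not_dvd]
    intro h
    have h2 : p ∣ p ^ d - 1 := h.trans hdvd
    have h3 : p ∣ p ^ d := dvd_pow_self p hd.ne'
    have h4 : p ∣ p ^ d - (p ^ d - 1) := Nat.dvd_sub h3 h2
    rw [Nat.sub_sub_self (le_of_lt hq1)] at h4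
    exact hp.one_lt.ne' (Nat.dvd_one.mp h4)
  haveI : NeZero n := ⟨by omega⟩
  set e := orderOf (p : ZMod n) with he
  have hepos : 0 < e := by
    obtain ⟨u, hu⟩ := (ZMod.isUnit_iff_coprime p n).mpr hcop
    rw [he, ← hu, orderOf_units]
    exact orderOf_pos u
  have hed : e ∣ d :=
    orderOf_dvd_of_pow_eq_one ((aux_pow_one_iff n p d hp.pos).mpr hdvd)
  have hne : n ∣ p ^ e - 1 := (aux_pow_one_iff n p e hp.pos).mp (pow_orderOf_eq_one _)
  -- every element of S satisfies s^n = 1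
  have hSpow : ∀ u : Fˣ, u ∈ S → (u : F) ^ n = 1 := by
    intro u hu
    have h1 : (⟨u, hu⟩ : S) ^ n = 1 := by rw [← hn]; exact pow_card_eq_one'
    have h2 := congrArg (fun x : S => ((x : Fˣ) : F)) h1
    simpa using h2
  -- every element of S satisfies s^(p^e) = s
  have hSfrob : ∀ u : Fˣ, u ∈ S → (u : F) ^ p ^ e = (u : F) := by
    intro u hu
    obtain ⟨k, hk⟩ := hne
    have h1 : p ^ e = n * k + 1 := by
      have : 1 ≤ p ^ e := Nat.one_le_pow _ _ hp.pos
      omega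
    rw [h1, pow_succ, pow_mul, hSpow u hu, one_pow, one_mul]
  -- characteristic of F is p
  haveI hcharF : CharP F p := by
    obtain ⟨r, hr⟩ := CharP.exists F
    haveI := hr
    obtain ⟨m, hrp, hcard⟩ := FiniteField.card F r
    have h1 : r ∣ p := by
      have : r ∣ p ^ d := by
        rw [← hF, hcard]; exact dvd_pow_self r m.ne_zero
      exact hrp.dvd_of_dvd_pow this
    have : r = p := ((Nat.prime_dvd_prime_iff_eq hrp hp).mp h1)
    rwa [this] at hr
  haveI : ExpChar F p := ExpChar.prime hp
  constructor
  · -- closure = ⊤ → e = d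
    intro htop
    have hK : AddSubgroup.closure ((fun u : Fˣ => (u : F)) '' (S : Set Fˣ)) ≤
        (RingHom.eqLocus (iterateFrobenius F p e) (RingHom.id F)).toAddSubgroup := by
      rw [AddSubgroup.closure_le]
      rintro x ⟨u, hu, rfl⟩
      show iterateFrobenius F p e (u : F) = (u : F)
      rw [iterateFrobenius_def]
      exact hSfrob u hu
    rw [htop, top_le_iff] at hK
    have hall : ∀ x : F, x ^ p ^ e = x := by
      intro x
      have hx : x ∈ (RingHom.eqLocus (iterateFrobenius F p e) (RingHom.id F)).toAddSubgroup := by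
        rw [hK]; trivial
      have : iterateFrobenius F p e x = x := hx
      rwa [iterateFrobenius_def] at this
    obtain ⟨g, hg⟩ := IsCyclic.exists_generator (α := Fˣ)
    have hog : orderOf g = p ^ d - 1 := by
      rw [orderOf_eq_card_of_forall_mem_zpowers hg, Nat.card_units,
        Nat.card_eq_fintype_card, hF]
    have hgpow : g ^ p ^ e = g := by
      ext
      push_cast
      exact hall (g : F)
    have hg1 : g ^ (p ^ e - 1) = 1 := by
      have h1 : 1 ≤ p ^ e := Nat.one_le_pow _ _ hp.pos
      have h2 : g ^ (p ^ e - 1) * g = g := by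
        rw [← pow_succ]
        have : p ^ e - 1 + 1 = p ^ e := by omega
        rw [this, hgpow]
      have h3 : g ^ (p ^ e - 1) * g = 1 * g := by rw [h2, one_mul]
      exact mul_right_cancel h3
    have hdvd2 : p ^ d - 1 ∣ p ^ e - 1 := hog ▸ orderOf_dvd_of_pow_eq_one hg1
    have hpe1 : 0 < p ^ e - 1 := by
      have : 2 ≤ p ^ e := by
        calc 2 ≤ p := hp.two_le
        _ = p ^ 1 := (pow_one p).symm
        _ ≤ p ^ e := Nat.pow_le_pow_right hp.pos hepos
      omega
    have hle : p ^ d - 1 ≤ p ^ e - 1 := Nat.le_of_dvd hpe1 hdvd2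
    have hde : d ≤ e := by
      have h1 : p ^ d ≤ p ^ e := by omega
      exact (Nat.pow_le_pow_iff_right hp.one_lt).mp h1
    exact le_antisymm (Nat.le_of_dvd hd hed) hde
  · -- e = d → closure = ⊤
    intro hedeq
    set A := AddSubgroup.closure ((fun u : Fˣ => (u : F)) '' (S : Set Fˣ)) with hA
    -- A is multiplicatively closed
    have hmul0 : ∀ a ∈ ((fun u : Fˣ => (u : F)) '' (S : Set Fˣ)), ∀ b ∈ A, a * b ∈ A := by
      rintro a ⟨u, hu, rfl⟩ b hb
      induction hb using AddSubgroup.closure_induction with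
      | mem x hx =>
        obtain ⟨v, hv, rfl⟩ := hx
        exact AddSubgroup.subset_closure ⟨u * v, S.mul_mem hu hv, by push_cast; ring⟩
      | zero => rw [mul_zero]; exact zero_mem A
      | add x y hx hy ihx ihy => rw [mul_add]; exact add_mem ihx ihy
      | neg x hx ihx => rw [mul_neg]; exact neg_mem ihx
    have hmul : ∀ a ∈ A, ∀ b ∈ A, a * b ∈ A := by
      intro a ha b hb
      induction ha using AddSubgroup.closure_induction with
      | mem x hx => exact hmul0 x hx b hb
      | zero => rw [zero_mul]; exact zero_mem A
      | add x y hx hy ihx ihy => rw [add_mul]; exact add_mem ihx ihy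
      | neg x hx ihx => rw [neg_mul]; exact neg_mem ihx
    let R : Subring F :=
      { carrier := (A : Set F)
        zero_mem' := zero_mem A
        add_mem' := fun h1 h2 => add_mem h1 h2
        neg_mem' := fun h => neg_mem h
        one_mem' := AddSubgroup.subset_closure ⟨1, S.one_mem, by simp⟩
        mul_mem' := fun {a b} ha hb => hmul a ha b hb }
    haveI : Fintype R := Fintype.ofFinite R
    letI : Field R := Fintype.fieldOfDomain R
    haveI : CharP R p := CharP.subring' F p R
    obtain ⟨m, -, hcardR⟩ := FiniteField.card R p
    -- S has an element of order n lying in R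
    obtain ⟨g, hg⟩ := IsCyclic.exists_generator (α := S)
    have hoS : orderOf g = n := by
      rw [orderOf_eq_card_of_forall_mem_zpowers hg, hn]
    have hoFx : orderOf ((g : Fˣ)) = n := by
      rw [← hoS]
      exact orderOf_injective S.subtype Subtype.coe_injective g
    have hoF : orderOf (((g : Fˣ) : F)) = n := by rw [orderOf_units, hoFx]
    have hgR : ((g : Fˣ) : F) ∈ R := AddSubgroup.subset_closure ⟨(g : Fˣ), g.2, rfl⟩
    set x : R := (⟨((g : Fˣ) : F), hgR⟩ : R) with hx
    have hoR : orderOf x = n := by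
      rw [← hoF]
      exact (orderOf_injective R.toSubmonoid.subtype Subtype.coe_injective x).symm
    have hxne : x ≠ 0 := by
      intro h
      have : ((g : Fˣ) : F) = 0 := congrArg Subtype.val h
      exact Units.ne_zero _ this
    obtain ⟨u, hu⟩ := hxne.isUnit
    have hoRu : orderOf u = n := by rw [← hoR, ← hu, orderOf_units]
    have hnR : n ∣ Nat.card R - 1 := by
      rw [← Nat.card_units, ← hoRu]
      exact orderOf_dvd_natCard u
    have hcardR' : Nat.card R = p ^ (m : ℕ) := by
      rw [Nat.card_eq_fintype_card, hcardR]
    have hnR' : n ∣ p ^ (m : ℕ) - 1 := by rwa [hcardR'] at hnR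
    have hdm : d ∣ (m : ℕ) := by
      rw [← hedeq]
      exact orderOf_dvd_of_pow_eq_one ((aux_pow_one_iff n p (m : ℕ) hp.pos).mpr hnR')
    have hdlem : d ≤ (m : ℕ) := Nat.le_of_dvd m.pos hdm
    have hcard_le : Nat.card R ≤ Nat.card F := Nat.card_le_card_of_injective _ Subtype.coe_injective
    have hcardF : Nat.card F = p ^ d := by rw [Nat.card_eq_fintype_card, hF]
    have hmd : (m : ℕ) = d := by
      have h1 : p ^ (m : ℕ) ≤ p ^ d := by rw [← hcardR', ← hcardF]; exact hcard_le
      have h2 : (m : ℕ) ≤ d := (Nat.pow_le_pow_iff_right hp.one_lt).mp h1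
      omega
    have hcards : Nat.card A = Nat.card F := by
      have : Nat.card A = Nat.card R := rfl
      rw [this, hcardR', hmd, hcardF]
    exact AddSubgroup.eq_top_of_card_eq A hcards
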